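/- Let Φ(ω) = θ(ω) − ∫_{−∞}^{ω} e^{−π s²} ds. Then the L¹ norm of the function ω ↦ ω·Φ(ω) on ℝ equals 1/(4π). -/

import Mathlib

open MeasureTheory Real

/-- The Heaviside step function: `0` for negative argument, `1` otherwise. -/
noncomputable def heaviside (ω : ℝ) : ℝ := if 0 ≤ ω then 1 else 0

/-- `Φ(ω) = θ(ω) − ∫_{−∞}^{ω} e^{−π s²} ds`. -/
noncomputable def Phi (ω : ℝ) : ℝ :=
  heaviside ω - ∫ s in Set.Iic ω, Real.exp (-π * s ^ 2)

lemma hg_int : Integrable (fun s : ℝ => Real.exp (-π * s ^ 2)) :=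
  integrable_exp_neg_mul_sq pi_pos

lemma g_total : ∫ s : ℝ, Real.exp (-π * s ^ 2) = 1 := by
  rw [integral_gaussian, div_self pi_ne_zero, Real.sqrt_one]

lemma gauss_Ioi : ∫ x in Set.Ioi (0:ℝ), Real.exp (-π * x ^ 2) = 1 / 2 := by
  rw [integral_gaussian_Ioi, div_self pi_ne_zero, Real.sqrt_one]

lemma hg2_int : Integrable (fun s : ℝ => s ^ 2 * Real.exp (-π * s ^ 2)) := by
  have h := integrable_rpow_mul_exp_neg_mul_sq pi_pos (by norm_num : (-1:ℝ) < 2)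
  have e : ∀ x : ℝ, x ^ (2:ℝ) = x ^ 2 := fun x => by
    rw [show (2:ℝ) = ((2:ℕ):ℝ) by norm_num, Real.rpow_natCast]
  simpa [e] using h

lemma Iic_add_Ioi (ω : ℝ) :
    (∫ s in Set.Iic ω, Real.exp (-π * s ^ 2))
      + ∫ s in Set.Ioi ω, Real.exp (-π * s ^ 2) = 1 := by
  rw [intervalIntegral.integral_Iic_add_Ioi hg_int.integrableOn hg_int.integrableOn, g_total]

lemma Iic_eq_Ioi_neg (ω : ℝ) :
    (∫ s in Set.Iic ω, Real.exp (-π * s ^ 2))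
      = ∫ s in Set.Ioi (-ω), Real.exp (-π * s ^ 2) := by
  have h := integral_comp_neg_Ioi (-ω) (fun s => Real.exp (-π * s ^ 2))
  rw [neg_neg] at h
  rw [← h]
  refine setIntegral_congr_fun measurableSet_Ioi fun x _ => by rw [neg_sq]

lemma key (ω : ℝ) :
    |ω * Phi ω| = |ω| * ∫ s in Set.Ioi |ω|, Real.exp (-π * s ^ 2) := by
  have tail_nonneg : ∀ t : ℝ, 0 ≤ ∫ s in Set.Ioi t, Real.exp (-π * s ^ 2) :=
    fun t => setIntegral_nonneg measurableSet_Ioi fun x _ => (Real.exp_pos _).le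
  rcases le_or_gt 0 ω with hω | hω
  · have hPhi : Phi ω = ∫ s in Set.Ioi ω, Real.exp (-π * s ^ 2) := by
      have h := Iic_add_Ioi ω
      unfold Phi heaviside
      rw [if_pos hω]; linarith
    rw [hPhi, abs_of_nonneg (mul_nonneg hω (tail_nonneg ω)), abs_of_nonneg hω]
  · have hPhi : Phi ω = -∫ s in Set.Ioi (-ω), Real.exp (-π * s ^ 2) := by
      unfold Phi heaviside
      rw [if_neg (not_le.mpr hω), Iic_eq_Ioi_neg]; ring
    rw [hPhi, abs_of_neg hω,
      show ω * -∫ s in Set.Ioi (-ω), Real.exp (-π * s ^ 2)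
          = (-ω) * ∫ s in Set.Ioi (-ω), Real.exp (-π * s ^ 2) by ring,
      abs_of_nonneg (mul_nonneg (neg_nonneg.mpr hω.le) (tail_nonneg (-ω)))]

lemma moment : ∫ x in Set.Ioi (0:ℝ), x ^ 2 * Real.exp (-π * x ^ 2) = 1 / (4 * π) := by
  have hder : ∀ x ∈ Set.Ici (0:ℝ),
      HasDerivAt (fun x : ℝ => -(x / (2 * π)) * Real.exp (-π * x ^ 2))
        (x ^ 2 * Real.exp (-π * x ^ 2) - 1 / (2 * π) * Real.exp (-π * x ^ 2)) x := by
    intro x _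
    have h1 : HasDerivAt (fun x : ℝ => -π * x ^ 2) (-π * (2 * x)) x := by
      simpa using (hasDerivAt_pow 2 x).const_mul (-π)
    have h2 := h1.exp
    have h3 : HasDerivAt (fun x : ℝ => -(x / (2 * π))) (-(1 / (2 * π))) x := by
      simpa using ((hasDerivAt_id x).div_const (2 * π)).fun_neg
    have h4 := h3.fun_mul h2
    refine h4.congr_deriv ?_
    have hπ : (π : ℝ) ≠ 0 := pi_ne_zero
    linear_combination (x ^ 2 * Real.exp (-π * x ^ 2)) * mul_inv_cancel₀ hπ
  have htend : Filter.Tendsto (fun x : ℝ => -(x / (2 * π)) * Real.exp (-π * x ^ 2))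
      Filter.atTop (nhds 0) := by
    have h := rpow_mul_exp_neg_mul_sq_isLittleO_exp_neg pi_pos 1
    have h0 : Filter.Tendsto (fun x : ℝ => Real.exp (-(1/2) * x)) Filter.atTop (nhds 0) := by
      apply Real.tendsto_exp_atBot.comp
      exact (Filter.tendsto_const_mul_atBot_of_neg (by norm_num : (-(1/2):ℝ) < 0)).2
        Filter.tendsto_id
    have h2 := h.tendsto_zero_of_tendsto h0
    simp only [Real.rpow_one] at h2
    have h3 := h2.const_mul (-(1 / (2 * π)))
    rw [mul_zero] at h3
    refine h3.congr fun x => by ring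
  have f'int : IntegrableOn (fun x : ℝ =>
      x ^ 2 * Real.exp (-π * x ^ 2) - 1 / (2 * π) * Real.exp (-π * x ^ 2)) (Set.Ioi 0) :=
    (hg2_int.sub (hg_int.const_mul _)).integrableOn
  have h0 := integral_Ioi_of_hasDerivAt_of_tendsto' hder f'int htend
  rw [integral_sub hg2_int.integrableOn (hg_int.const_mul _).integrableOn,
    integral_const_mul, gauss_Ioi] at h0
  have hπ : (0:ℝ) < π := pi_pos
  have : (1:ℝ) / (2 * π) * (1/2) = 1 / (4 * π) := by field_simp; ring
  rw [this] at h0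
  have hF0 : -((0:ℝ) / (2 * π)) * Real.exp (-π * (0:ℝ) ^ 2) = 0 := by simp
  rw [hF0] at h0
  linarith

open intervalIntegral in
lemma interval_id (s : ℝ) : ∫ x in (0:ℝ)..s, x = (s ^ 2 - 0 ^ 2) / 2 := integral_id

noncomputable def G : ℝ × ℝ → ℝ := fun p =>
  if 0 < p.1 ∧ p.1 < p.2 then p.1 * Real.exp (-π * p.2 ^ 2) else 0

lemma G_eq : G = Set.indicator {p : ℝ × ℝ | 0 < p.1 ∧ p.1 < p.2}
    (fun p => p.1 * Real.exp (-π * p.2 ^ 2)) := by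
  funext p; simp [G, Set.indicator_apply]

lemma G_meas : Measurable G := by
  rw [G_eq]
  refine Measurable.indicator ?_ ?_
  · exact measurable_fst.mul ((measurable_snd.pow_const 2).const_mul (-π)).exp
  · exact (measurableSet_lt measurable_const measurable_fst).inter
      (measurableSet_lt measurable_fst measurable_snd)

lemma G_nonneg (p : ℝ × ℝ) : 0 ≤ G p := by
  unfold G; split_ifs with h
  · exact mul_nonneg h.1.le (Real.exp_pos _).le
  · exact le_rfl

lemma G_slice (s : ℝ) : (fun ω => G (ω, s))
    = (Set.Ioo (0:ℝ) s).indicator (fun ω => ω * Real.exp (-π * s ^ 2)) := by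
  funext ω; simp [G, Set.indicator_apply, Set.mem_Ioo]

lemma G_slice_int (s : ℝ) : Integrable (fun ω => G (ω, s)) := by
  rw [G_slice]
  refine (IntegrableOn.integrable_indicator ?_ measurableSet_Ioo)
  exact ((continuous_id.mul continuous_const).integrableOn_Icc).mono_set Set.Ioo_subset_Icc_self

lemma Ioo_id_integral (s : ℝ) (hs : 0 < s) : ∫ ω in Set.Ioo (0:ℝ) s, ω = s ^ 2 / 2 := by
  rw [← integral_Ioc_eq_integral_Ioo, ← intervalIntegral.integral_of_le hs.le, interval_id]
  ring

lemma G_slice_val (s : ℝ) : (∫ ω, G (ω, s))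
    = (Set.Ioi (0:ℝ)).indicator (fun t => t ^ 2 / 2 * Real.exp (-π * t ^ 2)) s := by
  rw [G_slice, integral_indicator measurableSet_Ioo]
  rcases le_or_gt s 0 with hs | hs
  · rw [Set.Ioo_eq_empty (not_lt.mpr hs)]
    simp [Set.indicator_apply, not_lt.mpr hs]
  · rw [Set.indicator_of_mem (Set.mem_Ioi.mpr hs), integral_mul_const, Ioo_id_integral s hs]

lemma G_slice2 (ω : ℝ) : (fun s => G (ω, s))
    = if 0 < ω then (Set.Ioi ω).indicator (fun s => ω * Real.exp (-π * s ^ 2)) else 0 := by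
  funext s
  by_cases hω : 0 < ω
  · simp [G, Set.indicator_apply, Set.mem_Ioi, hω]
  · simp [G, hω]

lemma G_int : Integrable G (volume.prod volume) := by
  rw [integrable_prod_iff' G_meas.aestronglyMeasurable]
  constructor
  · exact Filter.Eventually.of_forall fun s => G_slice_int s
  · have hnorm : (fun s : ℝ => ∫ ω, ‖G (ω, s)‖) = fun s => ∫ ω, G (ω, s) := by
      funext s
      refine integral_congr_ae (Filter.Eventually.of_forall fun ω => ?_)
      show ‖G (ω, s)‖ = G (ω, s)
      rw [Real.norm_eq_abs, abs_of_nonneg (G_nonneg _)]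
    rw [hnorm]
    have : (fun s : ℝ => ∫ ω, G (ω, s))
        = (Set.Ioi (0:ℝ)).indicator (fun t => t ^ 2 / 2 * Real.exp (-π * t ^ 2)) := by
      funext s; exact G_slice_val s
    rw [this]
    refine Integrable.indicator ?_ measurableSet_Ioi
    have h2 : (fun t : ℝ => t ^ 2 / 2 * Real.exp (-π * t ^ 2))
        = fun t : ℝ => (t ^ 2 * Real.exp (-π * t ^ 2)) / 2 := funext fun t => by ring
    rw [h2]
    exact hg2_int.div_const 2

lemma fubini : (∫ x in Set.Ioi (0:ℝ), x * ∫ s in Set.Ioi x, Real.exp (-π * s ^ 2))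
    = ∫ s in Set.Ioi (0:ℝ), s ^ 2 / 2 * Real.exp (-π * s ^ 2) := by
  have swap := integral_integral_swap (f := fun ω s => G (ω, s)) (by exact G_int)
  have hL : (∫ ω, ∫ s, G (ω, s))
      = ∫ x in Set.Ioi (0:ℝ), x * ∫ s in Set.Ioi x, Real.exp (-π * s ^ 2) := by
    rw [← integral_indicator measurableSet_Ioi]
    refine integral_congr_ae (Filter.Eventually.of_forall fun ω => ?_)
    show (∫ s, G (ω, s))
        = (Set.Ioi (0:ℝ)).indicator (fun x => x * ∫ s in Set.Ioi x, Real.exp (-π * s ^ 2)) ω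
    rw [G_slice2 ω]
    by_cases hω : 0 < ω
    · rw [if_pos hω, integral_indicator measurableSet_Ioi,
        Set.indicator_of_mem (Set.mem_Ioi.mpr hω), integral_const_mul]
    · rw [if_neg hω, Set.indicator_of_notMem (by simpa using hω)]
      simp
  have hR : (∫ s, ∫ ω, G (ω, s)) = ∫ s in Set.Ioi (0:ℝ), s ^ 2 / 2 * Real.exp (-π * s ^ 2) := by
    rw [← integral_indicator measurableSet_Ioi]
    exact integral_congr_ae (Filter.Eventually.of_forall fun s => G_slice_val s)
  rw [← hL, ← hR]
  exact swap

/-- The `L¹` norm of `ω ↦ ω·Φ(ω)` on `ℝ` equals `1/(4π)`. -/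
theorem stmt_1 : ∫ ω : ℝ, |ω * Phi ω| = 1 / (4 * π) := by
  rw [show (∫ ω : ℝ, |ω * Phi ω|)
      = ∫ ω : ℝ, (fun x : ℝ => x * ∫ s in Set.Ioi x, Real.exp (-π * s ^ 2)) |ω| from
    integral_congr_ae (Filter.Eventually.of_forall fun ω => key ω)]
  rw [integral_comp_abs (f := fun x : ℝ => x * ∫ s in Set.Ioi x, Real.exp (-π * s ^ 2))]
  rw [fubini]
  have h1 : (∫ s in Set.Ioi (0:ℝ), s ^ 2 / 2 * Real.exp (-π * s ^ 2))
      = (∫ s in Set.Ioi (0:ℝ), s ^ 2 * Real.exp (-π * s ^ 2)) / 2 := by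
    rw [← integral_div]
    exact setIntegral_congr_fun measurableSet_Ioi fun s _ => by ring
  rw [h1, moment]
  ring
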